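/- Let Theta be convex, F directionally differentiable on Theta, and suppose theta^d is a composite (eps, rho)-strongly d-stationary point, where the minimum surrogate Fhat_min(.; theta^d) is directionally differentiable with Fhat_min(.; theta^d)'(theta^d; d) = F'(theta^d; d) for all directions d. Then theta^d is a d-stationary point of F on Theta: F'(theta^d; theta - theta^d) >= 0 for all theta in Theta. -/

import Mathlib

/-- If `f` is differentiable within `Ici 0` at `0` and `f 0 ≤ f t` for `t ∈ (0,1]`,
then the one-sided derivative is nonnegative. -/
lemma deriv_nonneg_of_min {f : ℝ → ℝ} {m : ℝ}
    (hf : HasDerivWithinAt f m (Set.Ici 0) 0)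
    (hle : ∀ t : ℝ, 0 < t → t ≤ 1 → f 0 ≤ f t) : 0 ≤ m := by
  have hslope := hasDerivWithinAt_iff_tendsto_slope.mp hf
  have hIoi : Set.Ici (0:ℝ) \ {0} = Set.Ioi 0 := by
    ext x; simp [Set.mem_diff, lt_iff_le_and_ne, eq_comm]
  rw [hIoi] at hslope
  refine le_of_tendsto_of_tendsto tendsto_const_nhds hslope ?_
  have h1 : Set.Ioc (0:ℝ) 1 ∈ nhdsWithin 0 (Set.Ioi 0) := by
    have := Filter.inter_mem (nhdsWithin_le_nhds (Iic_mem_nhds one_pos))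
      (self_mem_nhdsWithin (a := (0:ℝ)) (s := Set.Ioi 0))
    exact Filter.mem_of_superset this (fun x ⟨hx1, hx0⟩ => ⟨hx0, hx1⟩)
  filter_upwards [h1] with t ht
  have : slope f 0 t = (f t - f 0) / t := by simp [slope_def_field, div_eq_inv_mul]
  rw [this]
  exact div_nonneg (by linarith [hle t ht.1 ht.2]) ht.1.le

theorem stmt11 {q : ℕ} (Θ : Set (EuclideanSpace ℝ (Fin q))) (hΘ : Convex ℝ Θ)
    (F Fmin : EuclideanSpace ℝ (Fin q) → ℝ)
    (θd : EuclideanSpace ℝ (Fin q)) (hθd : θd ∈ Θ) (ρ : ℝ) (hρ : 0 < ρ)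
    (hFdd : ∀ d, DifferentiableWithinAt ℝ (fun t : ℝ => F (θd + t • d)) (Set.Ici 0) 0)
    (hMdd : ∀ d, DifferentiableWithinAt ℝ (fun t : ℝ => Fmin (θd + t • d)) (Set.Ici 0) 0)
    (hdd : ∀ d, derivWithin (fun t : ℝ => Fmin (θd + t • d)) (Set.Ici 0) 0
        = derivWithin (fun t : ℝ => F (θd + t • d)) (Set.Ici 0) 0)
    (hmin : ∀ θ ∈ Θ, Fmin θd ≤ Fmin θ + ρ / 2 * ‖θ - θd‖ ^ 2)
    (huniq : ∀ θ ∈ Θ, Fmin θ + ρ / 2 * ‖θ - θd‖ ^ 2 ≤ Fmin θd → θ = θd) :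
    ∀ θ ∈ Θ, 0 ≤ derivWithin (fun t : ℝ => F (θd + t • (θ - θd))) (Set.Ici 0) 0 := by
  intro θ hθ
  set d := θ - θd with hd
  rw [← hdd d]
  set m := derivWithin (fun t : ℝ => Fmin (θd + t • d)) (Set.Ici 0) 0 with hm
  have hM : HasDerivWithinAt (fun t : ℝ => Fmin (θd + t • d)) m (Set.Ici 0) 0 :=
    (hMdd d).hasDerivWithinAt
  -- quadratic part
  have hQ : HasDerivWithinAt (fun t : ℝ => ρ / 2 * t ^ 2 * ‖d‖ ^ 2) 0 (Set.Ici 0) 0 := by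
    have : HasDerivAt (fun t : ℝ => ρ / 2 * t ^ 2 * ‖d‖ ^ 2)
        (ρ / 2 * (2 * 0) * ‖d‖ ^ 2) 0 := by
      have h1 : HasDerivAt (fun t : ℝ => t ^ 2) (2 * 0) 0 := by
        simpa using (hasDerivAt_pow 2 (0:ℝ))
      exact ((h1.const_mul (ρ / 2)).mul_const (‖d‖ ^ 2))
    simpa using this.hasDerivWithinAt
  have hsum : HasDerivWithinAt
      (fun t : ℝ => Fmin (θd + t • d) + ρ / 2 * t ^ 2 * ‖d‖ ^ 2) m (Set.Ici 0) 0 := by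
    have h := hM.add hQ
    rw [add_zero] at h
    exact h
  have hge : 0 ≤ m := by
    refine deriv_nonneg_of_min hsum ?_
    intro t ht0 ht1
    have hmem : θd + t • d ∈ Θ := by
      have := hΘ hθd hθ (by linarith : (0:ℝ) ≤ 1 - t) ht0.le (by ring)
      convert this using 1
      rw [hd]; module
    have := hmin _ hmem
    have hnorm : ‖θd + t • d - θd‖ ^ 2 = t ^ 2 * ‖d‖ ^ 2 := by
      rw [show θd + t • d - θd = t • d by abel, norm_smul]
      rw [mul_pow, Real.norm_eq_abs, sq_abs]
    rw [hnorm] at this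
    simpa [mul_assoc, mul_comm, mul_left_comm] using this
  exact hge
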